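/- Let q be a prime power, t ≥ 2 with t | q - 1, and let H ≤ F_q^× be the multiplicative subgroup of order t. Then Füredi's graph G_t(q) contains no copy of K_{3,t}: there do not exist three distinct vertices u, v, z and t distinct vertices w_1, ..., w_t such that every u, v, z is adjacent to every w_i. -/

import Mathlib

/-- The `H`-orbit relation on nonzero points of `F × F`, where `H = {h : h^t = 1}` is the
multiplicative subgroup of `t`-th roots of unity. -/
def FurediRel {F : Type*} [Field F] (t : ℕ) :
    {p : F × F // p ≠ 0} → {p : F × F // p ≠ 0} → Prop :=
  fun v w => ∃ h : F, h ^ t = 1 ∧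
    (w : F × F) = (h * (v : F × F).1, h * (v : F × F).2)

/-- The vertex set of Füredi's graph `G_t(q)`: `H`-orbits of nonzero points of `F × F`. -/
def FurediVertex (F : Type*) [Field F] (t : ℕ) := Quot (FurediRel (F := F) t)

/-- Adjacency in Füredi's graph: `[a,b] ~ [x,y]` iff `ax + by ∈ H`, i.e. `(ax+by)^t = 1`. -/
def FurediAdj {F : Type*} [Field F] {t : ℕ} (u w : FurediVertex F t) : Prop :=
  ∃ p q : {p : F × F // p ≠ 0}, Quot.mk (FurediRel t) p = u ∧ Quot.mk (FurediRel t) q = w ∧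
    ((p : F × F).1 * (q : F × F).1 + (p : F × F).2 * (q : F × F).2) ^ t = 1

lemma furediNe0 {F : Type*} [Field F] {t : ℕ} (ht0 : t ≠ 0) {h : F} (hh : h ^ t = 1) :
    h ≠ 0 := by
  rintro rfl; rw [zero_pow ht0] at hh; exact zero_ne_one hh

lemma furediRel_equivalence {F : Type*} [Field F] {t : ℕ} (ht0 : t ≠ 0) :
    Equivalence (FurediRel (F := F) t) := by
  constructor
  · intro p; exact ⟨1, one_pow t, by simp⟩
  · rintro p q ⟨h, hh, heq⟩
    have h0 : h ≠ 0 := furediNe0 ht0 hh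
    refine ⟨h⁻¹, by rw [inv_pow, hh, inv_one], ?_⟩
    have : (q : F × F).1 = h * (p : F × F).1 ∧ (q : F × F).2 = h * (p : F × F).2 := by
      constructor <;> rw [heq]
    obtain ⟨h1, h2⟩ := this
    rw [h1, h2]
    ext <;> simp <;> field_simp
  · rintro p q r ⟨h, hh, heq⟩ ⟨h', hh', heq'⟩
    refine ⟨h' * h, by rw [mul_pow, hh, hh', one_mul], ?_⟩
    rw [heq', heq]
    simp [mul_assoc]

lemma furediMk_eq {F : Type*} [Field F] {t : ℕ} (ht0 : t ≠ 0) {p q : {p : F × F // p ≠ 0}} :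
    Quot.mk (FurediRel t) p = Quot.mk (FurediRel t) q ↔ FurediRel t p q :=
  Quot.eq.trans (Equivalence.eqvGen_iff (furediRel_equivalence ht0))

lemma furediAdj_reps {F : Type*} [Field F] {t : ℕ} (ht0 : t ≠ 0) {p q : {p : F × F // p ≠ 0}}
    (h : FurediAdj (Quot.mk (FurediRel t) p) (Quot.mk (FurediRel t) q)) :
    ((p : F × F).1 * (q : F × F).1 + (p : F × F).2 * (q : F × F).2) ^ t = 1 := by
  obtain ⟨p₁, q₁, hp₁, hq₁, hdot⟩ := h
  obtain ⟨h₁, hh₁, hep⟩ := (furediMk_eq ht0).1 hp₁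
  obtain ⟨h₂, hh₂, heq⟩ := (furediMk_eq ht0).1 hq₁
  have e1 : (p : F × F).1 = h₁ * (p₁ : F × F).1 := by rw [hep]
  have e2 : (p : F × F).2 = h₁ * (p₁ : F × F).2 := by rw [hep]
  have e3 : (q : F × F).1 = h₂ * (q₁ : F × F).1 := by rw [heq]
  have e4 : (q : F × F).2 = h₂ * (q₁ : F × F).2 := by rw [heq]
  rw [e1, e2, e3, e4]
  calc (h₁ * (p₁:F×F).1 * (h₂ * (q₁:F×F).1) + h₁ * (p₁:F×F).2 * (h₂ * (q₁:F×F).2)) ^ t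
      = (h₁ ^ t) * (h₂ ^ t) * ((p₁:F×F).1 * (q₁:F×F).1 + (p₁:F×F).2 * (q₁:F×F).2) ^ t := by
        rw [← mul_pow, ← mul_pow]; ring_nf
    _ = 1 := by rw [hh₁, hh₂, hdot]; ring

/-- Füredi's graph `G_t(q)` (with `t ≥ 2`, `t ∣ q - 1`) contains no copy of
`K_{3,t}`: there are no three distinct vertices `u, v, z` and `t` distinct vertices
`w_1, …, w_t` with every one of `u, v, z` adjacent to every `w_i`. -/
theorem stmt_19 {F : Type*} [Field F] [Fintype F] (t : ℕ) (ht : 2 ≤ t)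
    (hdvd : t ∣ Fintype.card F - 1) :
    ¬ ∃ (u v z : FurediVertex F t) (w : Fin t → FurediVertex F t),
      u ≠ v ∧ u ≠ z ∧ v ≠ z ∧ Function.Injective w ∧
      ∀ i, FurediAdj u (w i) ∧ FurediAdj v (w i) ∧ FurediAdj z (w i) := by
  classical
  rintro ⟨u, v, z, w, huv, huz, hvz, hwinj, hadj⟩
  have ht0 : t ≠ 0 := by omega
  obtain ⟨pu, hpu⟩ := Quot.exists_rep u
  obtain ⟨pv, hpv⟩ := Quot.exists_rep v
  obtain ⟨pz, hpz⟩ := Quot.exists_rep z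
  choose r hr using fun i => Quot.exists_rep (w i)
  set a : F := (pu : F × F).1 with ha_def
  set b : F := (pu : F × F).2 with hb_def
  set a' : F := (pv : F × F).1 with ha'_def
  set b' : F := (pv : F × F).2 with hb'_def
  set c : F := (pz : F × F).1 with hc_def
  set d : F := (pz : F × F).2 with hd_def
  -- raw adjacency facts
  have hAu : ∀ i, (a * (r i : F × F).1 + b * (r i : F × F).2) ^ t = 1 := fun i =>
    furediAdj_reps ht0 (by rw [hpu, hr]; exact (hadj i).1)
  -- normalization
  set e : Fin t → F := fun i => a * (r i : F × F).1 + b * (r i : F × F).2 with he_def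
  have he0 : ∀ i, e i ≠ 0 := fun i => furediNe0 ht0 (hAu i)
  set x : Fin t → F := fun i => (r i : F × F).1 / e i with hx_def
  set y : Fin t → F := fun i => (r i : F × F).2 / e i with hy_def
  have hxy0 : ∀ i, ((x i, y i) : F × F) ≠ 0 := by
    intro i h0
    rw [Prod.mk_eq_zero] at h0
    apply (r i).2
    have h1 : (r i : F × F).1 = 0 := by
      have := h0.1; rwa [hx_def, div_eq_zero_iff, or_iff_left (he0 i)] at this
    have h2 : (r i : F × F).2 = 0 := by
      have := h0.2; rwa [hy_def, div_eq_zero_iff, or_iff_left (he0 i)] at this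
    exact Prod.ext h1 h2
  set r' : Fin t → {p : F × F // p ≠ 0} := fun i => ⟨(x i, y i), hxy0 i⟩ with hr'_def
  have hr' : ∀ i, Quot.mk (FurediRel t) (r' i) = w i := by
    intro i
    rw [← hr i]
    refine (Quot.sound ?_).symm
    refine ⟨(e i)⁻¹, by rw [inv_pow, hAu i, inv_one], ?_⟩
    show ((x i, y i) : F × F) = _
    rw [hx_def, hy_def]
    ext <;> simp <;> field_simp
  -- normalized adjacency
  have hA : ∀ i, a * x i + b * y i = 1 := by
    intro i
    have hstep : a * x i + b * y i = e i / e i := by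
      rw [hx_def, hy_def, he_def]; ring
    rw [hstep, div_self (he0 i)]
  set h : Fin t → F := fun i => a' * x i + b' * y i with hh_def
  have hB : ∀ i, (h i) ^ t = 1 := fun i =>
    furediAdj_reps (p := pv) (q := r' i) ht0 (by rw [hpv, hr']; exact (hadj i).2.1)
  have hC : ∀ i, (c * x i + d * y i) ^ t = 1 := fun i =>
    furediAdj_reps (p := pz) (q := r' i) ht0 (by rw [hpz, hr']; exact (hadj i).2.2)
  have i0 : Fin t := ⟨0, by omega⟩
  -- determinant nonzero
  have hdet : a * b' - b * a' ≠ 0 := by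
    intro h0
    obtain ⟨l, hl1, hl2⟩ : ∃ l : F, a' = l * a ∧ b' = l * b := by
      rcases eq_or_ne a 0 with haz | haz
      · have hbz : b ≠ 0 := by
          intro hbz
          exact pu.2 (by rw [← Prod.mk.eta (p := (pu : F × F)), ← ha_def, ← hb_def, haz, hbz]; rfl)
        refine ⟨b' / b, ?_, by field_simp⟩
        have : b * a' = 0 := by linear_combination -h0 + b' * haz
        rcases mul_eq_zero.mp this with h | h
        · exact absurd h hbz
        · rw [h, haz, mul_zero]
      · refine ⟨a' / a, by field_simp, ?_⟩
        field_simp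
        linear_combination h0
    have hlH : l ^ t = 1 := by
      have := hB i0
      rw [hh_def] at this
      simp only at this
      rw [hl1, hl2] at this
      have heq : l * a * x i0 + l * b * y i0 = l * (a * x i0 + b * y i0) := by ring
      rw [heq, hA i0, mul_one] at this
      exact this
    exact huv (by rw [← hpu, ← hpv]; exact Quot.sound ⟨l, hlH, by
      rw [← Prod.mk.eta (p := (pv : F × F)), ← ha'_def, ← hb'_def, hl1, hl2]⟩)
  -- coordinates of z in the basis
  set det : F := a * b' - b * a' with hdet_def
  set α : F := (c * b' - d * a') / det with hα_def
  set β : F := (a * d - b * c) / det with hβ_def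
  have hcd : c = α * a + β * a' ∧ d = α * b + β * b' := by
    constructor <;> (rw [hα_def, hβ_def]; field_simp; ring)
  have hαβ : ∀ i, c * x i + d * y i = α + β * h i := by
    intro i
    rw [hcd.1, hcd.2, hh_def]
    have : (α * a + β * a') * x i + (α * b + β * b') * y i
        = α * (a * x i + b * y i) + β * (a' * x i + b' * y i) := by ring
    rw [this, hA i, mul_one]
  -- h is injective
  have hhinj : Function.Injective h := by
    intro i j hij
    apply hwinj
    rw [← hr' i, ← hr' j]
    have e1 : a * x i + b * y i = a * x j + b * y j := by rw [hA i, hA j]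
    have e2 : a' * x i + b' * y i = a' * x j + b' * y j := hij
    have hx1 : x i = x j := by
      have : det * (x i - x j) = 0 := by rw [hdet_def]; linear_combination b' * e1 - b * e2
      rcases mul_eq_zero.mp this with hq | hq
      · exact absurd hq hdet
      · exact sub_eq_zero.mp hq
    have hy1 : y i = y j := by
      have : det * (y i - y j) = 0 := by rw [hdet_def]; linear_combination (-a') * e1 + a * e2
      rcases mul_eq_zero.mp this with hq | hq
      · exact absurd hq hdet
      · exact sub_eq_zero.mp hq
    congr 1
    exact Subtype.ext (by rw [hr'_def]; simp [hx1, hy1])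
  -- the set of t-th roots of unity
  set s : Finset F := Finset.image h Finset.univ with hs_def
  have hscard : s.card = t := by
    rw [hs_def, Finset.card_image_of_injective _ hhinj, Finset.card_univ, Fintype.card_fin]
  have hs_pow : ∀ g ∈ s, g ^ t = 1 := by
    intro g hg
    rw [hs_def, Finset.mem_image] at hg
    obtain ⟨i, -, rfl⟩ := hg
    exact hB i
  have hroot : ∀ g : F, g ^ t = 1 → g ∈ s := by
    have hsub : s ⊆ (Polynomial.nthRoots t (1 : F)).toFinset := by
      intro g hg
      rw [Multiset.mem_toFinset, Polynomial.mem_nthRoots (by omega)]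
      exact hs_pow g hg
    have hcardle : (Polynomial.nthRoots t (1 : F)).toFinset.card ≤ s.card := by
      rw [hscard]
      exact le_trans (Multiset.toFinset_card_le _) (Polynomial.card_nthRoots t 1)
    have heq := Finset.eq_of_subset_of_card_le hsub hcardle
    intro g hg
    rw [heq, Multiset.mem_toFinset, Polynomial.mem_nthRoots (by omega)]
    exact hg
  -- sum of roots is zero
  set S : F := ∑ g ∈ s, g with hS_def
  have hS0 : S = 0 := by
    obtain ⟨g, hgs, hg1⟩ := Finset.exists_mem_ne (by omega : 1 < s.card) 1
    have hg0 : g ≠ 0 := furediNe0 ht0 (hs_pow g hgs)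
    have himg : Finset.image (fun x => g * x) s = s := by
      apply Finset.eq_of_subset_of_card_le
      · intro k hk
        rw [Finset.mem_image] at hk
        obtain ⟨m, hm, rfl⟩ := hk
        exact hroot _ (by rw [mul_pow, hs_pow g hgs, hs_pow m hm, mul_one])
      · rw [Finset.card_image_of_injective _ (mul_right_injective₀ hg0)]
    have : ∑ k ∈ Finset.image (fun x => g * x) s, k = ∑ m ∈ s, g * m :=
      Finset.sum_image (fun m _ n _ hmn => mul_left_cancel₀ hg0 hmn)
    rw [himg] at this
    have hgSS : g * S = S := by rw [hS_def, Finset.mul_sum, ← this]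
    have : (g - 1) * S = 0 := by rw [sub_mul, hgSS, one_mul, sub_self]
    rcases mul_eq_zero.mp this with hq | hq
    · exact absurd (sub_eq_zero.mp hq) hg1
    · exact hq
  -- (t : F) ≠ 0
  have htF : (t : F) ≠ 0 := by
    intro h0
    set p := ringChar F with hp_def
    have hchar : CharP F p := ringChar.charP F
    have hprime : p.Prime := CharP.char_is_prime F p
    have hpt : p ∣ t := (CharP.cast_eq_zero_iff F p t).mp h0
    obtain ⟨n, -, hcard⟩ := FiniteField.card F p
    have hpq : p ∣ Fintype.card F := by
      rw [hcard]; exact dvd_pow_self p n.ne_zero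
    have hpq1 : p ∣ Fintype.card F - 1 := hpt.trans hdvd
    have h1 : p ∣ 1 := by
      have := Nat.dvd_sub hpq hpq1
      rwa [Nat.sub_sub_self (Nat.one_le_iff_ne_zero.mpr Fintype.card_ne_zero)] at this
    exact hprime.one_lt.ne' (Nat.dvd_one.mp h1)
  -- case analysis on β
  rcases eq_or_ne β 0 with hβ0 | hβ0
  · -- z = u
    have hαH : α ^ t = 1 := by
      have := hC i0
      rw [hαβ i0, hβ0, zero_mul, add_zero] at this
      exact this
    exact huz (by rw [← hpu, ← hpz]; exact Quot.sound ⟨α, hαH, by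
      rw [← Prod.mk.eta (p := (pz : F × F)), ← hc_def, ← hd_def, hcd.1, hcd.2, hβ0]
      simp; exact ⟨Or.inl rfl, Or.inl rfl⟩⟩)
  · -- sum argument gives α = 0, then z = v
    have hφinj : Function.Injective (fun i => α + β * h i) := by
      intro i j hij
      simp only at hij
      exact hhinj (mul_left_cancel₀ hβ0 (add_left_cancel hij))
    have hφimg : Finset.image (fun i => α + β * h i) Finset.univ = s := by
      apply Finset.eq_of_subset_of_card_le
      · intro k hk
        rw [Finset.mem_image] at hk
        obtain ⟨i, -, rfl⟩ := hk
        exact hroot _ (by rw [← hαβ i]; exact hC i)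
      · rw [Finset.card_image_of_injective _ hφinj, Finset.card_univ, Fintype.card_fin, hscard]
    have hsum1 : ∑ i : Fin t, (α + β * h i) = S := by
      rw [hS_def, ← hφimg]
      exact (Finset.sum_image (f := fun g => g) (fun i _ j _ hij => hφinj hij)).symm
    have hsumh : ∑ i : Fin t, h i = S := by
      rw [hS_def, hs_def]
      exact (Finset.sum_image (f := fun g => g) (fun i _ j _ hij => hhinj hij)).symm
    have hexp : ∑ i : Fin t, (α + β * h i) = (t : F) * α + β * ∑ i : Fin t, h i := by
      rw [Finset.sum_add_distrib, Finset.sum_const, Finset.card_univ, Fintype.card_fin,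
        ← Finset.mul_sum, nsmul_eq_mul]
    have hα0 : α = 0 := by
      have : (t : F) * α = 0 := by
        have := hsum1
        rw [hexp, hsumh, hS0, mul_zero, add_zero] at this
        exact this
      rcases mul_eq_zero.mp this with hq | hq
      · exact absurd hq htF
      · exact hq
    have hβH : β ^ t = 1 := by
      have := hC i0
      rw [hαβ i0, hα0, zero_add, mul_pow, hB i0, mul_one] at this
      exact this
    exact hvz (by rw [← hpv, ← hpz]; exact Quot.sound ⟨β, hβH, by
      rw [← Prod.mk.eta (p := (pz : F × F)), ← hc_def, ← hd_def, hcd.1, hcd.2, hα0]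
      simp [mul_comm]; exact ⟨Or.inl rfl, Or.inl rfl⟩⟩)
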